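/- Single-row coefficient of general Chern plethysm: for any partition λ with at most n parts and n ≥ 2, the coefficient of s_{(|λ|)} in the Schur expansion of \overline{s}_λ(x_1,...,x_n) equals the number of semistandard Young tableaux of shape λ with entries in {2, 3, ..., n}. -/

import Mathlib

open MvPolynomial Finset
open scoped Classical

/-- The Schur polynomial in `n` variables indexed by a Young diagram `μ`:
the sum over all semistandard fillings of the cells of `μ` with values in `Fin n`
(weakly increasing along rows, strictly increasing down columns) of the product
of the corresponding variables. -/
noncomputable def schur (μ : YoungDiagram) (n : ℕ) : MvPolynomial (Fin n) ℚ :=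
  ∑ T : μ.cells → Fin n,
    if ((∀ a b : μ.cells, a.1.1 = b.1.1 → a.1.2 ≤ b.1.2 → T a ≤ T b) ∧
        (∀ a b : μ.cells, a.1.2 = b.1.2 → a.1.1 < b.1.1 → T a < T b))
    then ∏ c, MvPolynomial.X (T c) else 0

/-- Chern plethysm `\overline{s}_λ(x_1,…,x_n)`: the Schur polynomial `s_λ` evaluated at
the `n` quantities `(x_1+⋯+x_n) - x_i`. -/
noncomputable def sbar (μ : YoungDiagram) (n : ℕ) : MvPolynomial (Fin n) ℚ :=
  MvPolynomial.aeval (fun i : Fin n => (∑ j : Fin n, X j) - X i) (schur μ n)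

/-- The number of standard fillings of a finite set `s` of cells: bijective fillings by
`0, 1, …, |s|-1` that strictly increase along rows and down columns. -/
noncomputable def sytCountCells (s : Finset (ℕ × ℕ)) : ℕ :=
  Nat.card {T : s → ℕ //
    Function.Injective T ∧ (∀ x, T x < s.card) ∧
    (∀ a b : s, a.1.1 = b.1.1 → a.1.2 < b.1.2 → T a < T b) ∧
    (∀ a b : s, a.1.2 = b.1.2 → a.1.1 < b.1.1 → T a < T b)}

/-- `f^{λ/μ}`: the number of standard Young tableaux of skew shape `λ/μ`,
with the convention that it is `0` if `μ ⊄ λ`. -/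
noncomputable def sytSkew (lam nu : YoungDiagram) : ℕ :=
  if nu ≤ lam then sytCountCells (lam.cells \ nu.cells) else 0

/-- The number of semistandard fillings of a finite set `s` of cells with entries in
`{lo, …, hi}` (weakly increasing along rows, strictly increasing down columns). -/
noncomputable def ssytCountCells (s : Finset (ℕ × ℕ)) (lo hi : ℕ) : ℕ :=
  Nat.card {T : s → ℕ //
    (∀ x, lo ≤ T x ∧ T x ≤ hi) ∧
    (∀ a b : s, a.1.1 = b.1.1 → a.1.2 ≤ b.1.2 → T a ≤ T b) ∧
    (∀ a b : s, a.1.2 = b.1.2 → a.1.1 < b.1.1 → T a < T b)}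

/-- The single-row Young diagram `(k)`. -/
noncomputable def rowD (k : ℕ) : YoungDiagram :=
  YoungDiagram.ofRowLens [k] (List.Pairwise.sortedGE (List.pairwise_singleton _ k))

/-- The single-column Young diagram `(1^k)`. -/
noncomputable def colD (k : ℕ) : YoungDiagram := (rowD k).transpose

lemma mem_rowD {k : ℕ} {c : ℕ × ℕ} : c ∈ rowD k ↔ c.1 = 0 ∧ c.2 < k := by
  rw [rowD, YoungDiagram.mem_ofRowLens]
  constructor
  · rintro ⟨h, h2⟩
    simp only [List.length_singleton] at h
    have h0 : c.1 = 0 := by omega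
    refine ⟨h0, ?_⟩
    simpa [h0] using h2
  · rintro ⟨h1, h2⟩
    refine ⟨by simp [h1], ?_⟩
    simp [h1, h2]

lemma rowD_card (k : ℕ) : (rowD k).card = k := by
  have : (rowD k).cells = {0} ×ˢ Finset.range k := by
    ext ⟨i, j⟩
    simp only [YoungDiagram.mem_cells, mem_rowD, Finset.mem_product, Finset.mem_singleton, Finset.mem_range]
  rw [YoungDiagram.card, this]
  simp

lemma colLen_rowD (k : ℕ) : (rowD k).colLen 0 ≤ 1 := by
  by_contra h
  push_neg at h
  have : (1, 0) ∈ rowD k := YoungDiagram.mem_iff_lt_colLen.2 h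
  simp [mem_rowD] at this

lemma eq_rowD {κ : YoungDiagram} (h : κ.colLen 0 ≤ 1) : κ = rowD κ.card := by
  have hrow : ∀ c : ℕ × ℕ, c ∈ κ → c.1 = 0 := by
    rintro ⟨i, j⟩ hc
    by_contra hi
    have h1 : (1, 0) ∈ κ := κ.up_left_mem (by omega) (Nat.zero_le _) hc
    exact absurd (YoungDiagram.mem_iff_lt_colLen.1 h1) (by omega)
  have hcells : κ.cells = {0} ×ˢ Finset.range (κ.rowLen 0) := by
    ext ⟨i, j⟩
    simp only [YoungDiagram.mem_cells, Finset.mem_product, Finset.mem_singleton,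
      Finset.mem_range]
    constructor
    · intro hm
      have := hrow _ hm
      subst this
      exact ⟨rfl, YoungDiagram.mem_iff_lt_rowLen.1 hm⟩
    · rintro ⟨rfl, hj⟩
      exact YoungDiagram.mem_iff_lt_rowLen.2 hj
  have hcard : κ.card = κ.rowLen 0 := by
    rw [YoungDiagram.card, hcells]; simp
  have : κ.cells = (rowD κ.card).cells := by
    ext c
    rw [hcells, YoungDiagram.mem_cells, mem_rowD, hcard]
    rcases c with ⟨i, j⟩
    simp only [Finset.mem_product, Finset.mem_singleton, Finset.mem_range]
  exact YoungDiagram.ext (by rw [this])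

def Pred (μ : YoungDiagram) (n : ℕ) (T : μ.cells → Fin n) : Prop :=
  (∀ a b : μ.cells, a.1.1 = b.1.1 → a.1.2 ≤ b.1.2 → T a ≤ T b) ∧
  (∀ a b : μ.cells, a.1.2 = b.1.2 → a.1.1 < b.1.1 → T a < T b)

noncomputable def phi (n : ℕ) : MvPolynomial (Fin n) ℚ →ₐ[ℚ] Polynomial ℚ :=
  aeval (fun i : Fin n => if i.val = 0 then Polynomial.X else 0)

lemma pred_const_zero {μ : YoungDiagram} {n : ℕ} (hn : 0 < n) :
    Pred μ n (fun _ => (Fin.mk 0 hn : Fin n)) ↔ μ.colLen 0 ≤ 1 := by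
  constructor
  · intro h
    by_contra hcol
    push_neg at hcol
    have h10 : (1, 0) ∈ μ := YoungDiagram.mem_iff_lt_colLen.2 hcol
    have h00 : (0, 0) ∈ μ := μ.up_left_mem (Nat.zero_le _) le_rfl h10
    have := h.2 ⟨(0,0), (YoungDiagram.mem_cells _).2 h00⟩ ⟨(1,0), (YoungDiagram.mem_cells _).2 h10⟩
      rfl Nat.zero_lt_one
    exact absurd this (lt_irrefl _)
  · intro h
    refine ⟨fun _ _ _ _ => le_rfl, fun a b hj hij => absurd hij ?_⟩
    have hb : b.1.1 < μ.colLen b.1.2 :=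
      YoungDiagram.mem_iff_lt_colLen.1 ((YoungDiagram.mem_cells _).1 b.2)
    have : μ.colLen b.1.2 ≤ μ.colLen 0 := μ.colLen_anti 0 _ (Nat.zero_le _)
    omega

lemma phi_schur {n : ℕ} (hn : 0 < n) (μ : YoungDiagram) :
    phi n (schur μ n) = if μ.colLen 0 ≤ 1 then Polynomial.X ^ μ.card else 0 := by
  unfold schur
  rw [map_sum]
  have key : ∀ T : μ.cells → Fin n,
      phi n (if ((∀ a b : μ.cells, a.1.1 = b.1.1 → a.1.2 ≤ b.1.2 → T a ≤ T b) ∧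
        (∀ a b : μ.cells, a.1.2 = b.1.2 → a.1.1 < b.1.1 → T a < T b))
        then ∏ c, MvPolynomial.X (T c) else 0)
        = if T = (fun _ => (Fin.mk 0 hn : Fin n)) ∧ μ.colLen 0 ≤ 1
          then Polynomial.X ^ μ.card else 0 := by
    intro T
    rw [apply_ite (phi n), map_zero, map_prod]
    have hx : ∀ c : μ.cells, phi n (MvPolynomial.X (T c))
        = if T c = Fin.mk 0 hn then Polynomial.X else 0 := by
      intro c
      show (aeval (fun i : Fin n => if i.val = 0 then Polynomial.X else 0))
        (MvPolynomial.X (T c)) = _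
      rw [aeval_X]
      congr 1
      simp [Fin.ext_iff]
    by_cases hP : ((∀ a b : μ.cells, a.1.1 = b.1.1 → a.1.2 ≤ b.1.2 → T a ≤ T b) ∧
        (∀ a b : μ.cells, a.1.2 = b.1.2 → a.1.1 < b.1.1 → T a < T b))
    · rw [if_pos hP]
      by_cases h0 : ∀ c : μ.cells, T c = Fin.mk 0 hn
      · have hT : T = fun _ => (Fin.mk 0 hn : Fin n) := funext h0
        have hP' : Pred μ n T := hP
        have hcol : μ.colLen 0 ≤ 1 := (pred_const_zero hn).1 (hT ▸ hP')
        rw [if_pos ⟨hT, hcol⟩]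
        simp only [hx]
        rw [Finset.prod_congr rfl (fun c _ => if_pos (h0 c)), Finset.prod_const,
          Finset.card_univ, Fintype.card_coe]
      · push_neg at h0
        obtain ⟨c0, hc0⟩ := h0
        rw [if_neg (by rintro ⟨rfl, -⟩; exact hc0 rfl)]
        refine Finset.prod_eq_zero (Finset.mem_univ c0) ?_
        rw [hx, if_neg hc0]
    · rw [if_neg hP, if_neg]
      rintro ⟨rfl, hcol⟩
      exact hP ((pred_const_zero hn).2 hcol)

  rw [Finset.sum_congr rfl (fun T _ => key T)]
  by_cases hcol : μ.colLen 0 ≤ 1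
  · simp only [hcol, and_true]
    rw [Finset.sum_ite_eq' Finset.univ (fun _ => (Fin.mk 0 hn : Fin n))
      (fun _ => Polynomial.X ^ μ.card)]
    simp
  · simp [hcol]

lemma phi_sbar {n : ℕ} (hn : 0 < n) (μ : YoungDiagram) :
    phi n (sbar μ n) =
      (Finset.univ.filter (fun T : μ.cells → Fin n =>
        Pred μ n T ∧ ∀ c, (T c).val ≠ 0)).card • Polynomial.X ^ μ.card := by
  have hcomp : phi n (sbar μ n)
      = aeval (fun i : Fin n => if i.val = 0 then (0 : Polynomial ℚ) else Polynomial.X)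
          (schur μ n) := by
    rw [sbar, ← AlgHom.comp_apply, MvPolynomial.comp_aeval]
    have hfun : (fun i : Fin n => phi n ((∑ j : Fin n, MvPolynomial.X j) - MvPolynomial.X i))
        = fun i : Fin n => if i.val = 0 then (0 : Polynomial ℚ) else Polynomial.X := by
      funext i
      rw [map_sub, map_sum]
      have h1 : ∑ j : Fin n, phi n (MvPolynomial.X j) = Polynomial.X := by
        have hj : ∀ j : Fin n, phi n (MvPolynomial.X j)
            = if j = Fin.mk 0 hn then Polynomial.X else 0 := by
          intro j
          show (aeval (fun i : Fin n => if i.val = 0 then Polynomial.X else 0))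
            (MvPolynomial.X j) = _
          rw [aeval_X]
          congr 1
          simp [Fin.ext_iff]
        rw [Finset.sum_congr rfl fun j _ => hj j,
          Finset.sum_ite_eq' Finset.univ (Fin.mk 0 hn) (fun _ => Polynomial.X)]
        simp
      have h2 : phi n (MvPolynomial.X i) = if i.val = 0 then Polynomial.X else 0 := by
        show (aeval (fun i : Fin n => if i.val = 0 then Polynomial.X else 0))
          (MvPolynomial.X i) = _
        rw [aeval_X]
      rw [h1, h2]
      by_cases hi : i.val = 0 <;> simp [hi]
    rw [hfun]
  rw [hcomp]
  unfold schur
  rw [map_sum]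
  have key : ∀ T : μ.cells → Fin n,
      aeval (R := ℚ) (fun i : Fin n => if i.val = 0 then (0:Polynomial ℚ) else Polynomial.X)
        (if ((∀ a b : μ.cells, a.1.1 = b.1.1 → a.1.2 ≤ b.1.2 → T a ≤ T b) ∧
        (∀ a b : μ.cells, a.1.2 = b.1.2 → a.1.1 < b.1.1 → T a < T b))
        then ∏ c, MvPolynomial.X (T c) else 0)
      = if (Pred μ n T ∧ ∀ c, (T c).val ≠ 0) then Polynomial.X ^ μ.card else 0 := by
    intro T
    rw [apply_ite (aeval (R := ℚ) (fun i : Fin n => if i.val = 0 then (0:Polynomial ℚ) else Polynomial.X)),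
      map_zero, map_prod]
    have hx : ∀ c : μ.cells,
        aeval (R := ℚ) (fun i : Fin n => if i.val = 0 then (0:Polynomial ℚ) else Polynomial.X)
          (MvPolynomial.X (T c)) = if (T c).val = 0 then 0 else Polynomial.X := by
      intro c; rw [aeval_X]
    by_cases hP : ((∀ a b : μ.cells, a.1.1 = b.1.1 → a.1.2 ≤ b.1.2 → T a ≤ T b) ∧
        (∀ a b : μ.cells, a.1.2 = b.1.2 → a.1.1 < b.1.1 → T a < T b))
    · rw [if_pos hP]
      by_cases h0 : ∀ c : μ.cells, (T c).val ≠ 0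
      · rw [if_pos ⟨hP, h0⟩]
        simp only [hx]
        rw [Finset.prod_congr rfl (fun c _ => if_neg (h0 c)), Finset.prod_const,
          Finset.card_univ, Fintype.card_coe]
      · push_neg at h0
        obtain ⟨c0, hc0⟩ := h0
        rw [if_neg (fun h => h.2 c0 hc0)]
        refine Finset.prod_eq_zero (Finset.mem_univ c0) ?_
        rw [hx, if_pos hc0]
    · rw [if_neg hP, if_neg (fun h => hP h.1)]
  rw [Finset.sum_congr rfl fun T _ => key T, Finset.sum_ite, Finset.sum_const,
    Finset.sum_const_zero, add_zero]

lemma count_eq {n : ℕ} (μ : YoungDiagram) :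
    (Finset.univ.filter (fun T : μ.cells → Fin n =>
      Pred μ n T ∧ ∀ c, (T c).val ≠ 0)).card = ssytCountCells μ.cells 2 n := by
  have e : {T : μ.cells → Fin n // Pred μ n T ∧ ∀ c, (T c).val ≠ 0} ≃
      {S : μ.cells → ℕ //
        (∀ x, 2 ≤ S x ∧ S x ≤ n) ∧
        (∀ a b : μ.cells, a.1.1 = b.1.1 → a.1.2 ≤ b.1.2 → S a ≤ S b) ∧
        (∀ a b : μ.cells, a.1.2 = b.1.2 → a.1.1 < b.1.1 → S a < S b)} := by
    refine ⟨fun T => ⟨fun x => (T.1 x).val + 1, ?_, ?_, ?_⟩,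
      fun S => ⟨fun x => ⟨S.1 x - 1, ?_⟩, ⟨fun a b hr hc => ?_, fun a b hr hc => ?_⟩, ?_⟩,
      ?_, ?_⟩
    · intro x
      have h1 : (T.1 x).val ≠ 0 := T.2.2 x
      have h2 : (T.1 x).val < n := (T.1 x).isLt
      simp only
      omega
    · intro a b hr hc
      have := T.2.1.1 a b hr hc
      rw [Fin.le_def] at this
      simp only
      omega
    · intro a b hr hc
      have := T.2.1.2 a b hr hc
      rw [Fin.lt_def] at this
      simp only
      omega
    · have h1 := (S.2.1 x).1
      have h2 := (S.2.1 x).2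
      omega
    · have := S.2.2.1 a b hr hc
      rw [Fin.le_def]
      simp only
      omega
    · have h1 := S.2.2.2 a b hr hc
      have h2 := (S.2.1 a).1
      rw [Fin.lt_def]
      simp only
      omega
    · intro x
      have := (S.2.1 x).1
      simp only
      omega
    · intro T
      ext x
      simp
    · intro S
      ext x
      have := (S.2.1 x).1
      simp only
      omega
  rw [ssytCountCells, ← Nat.card_congr e, Nat.card_eq_fintype_card, Fintype.card_subtype]

/-- single-row coefficient of general Chern plethysm: for a partition `λ`
with at most `n` parts, `n ≥ 2`, the coefficient of `s_{(|λ|)}` in the Schur expansion of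
`\overline{s}_λ(x_1,…,x_n)` equals the number of semistandard Young tableaux of shape `λ`
with entries in `{2,…,n}`. -/
theorem coeff_single_row_sbar (n : ℕ) (hn : 2 ≤ n) (lam : YoungDiagram)
    (hl : lam.colLen 0 ≤ n)
    (c : YoungDiagram → ℚ) (hfin : (Function.support c).Finite)
    (hsupp : ∀ kappa : YoungDiagram, c kappa ≠ 0 → kappa.colLen 0 ≤ n)
    (hc : sbar lam n = ∑ᶠ kappa : YoungDiagram, c kappa • schur kappa n) :
    c (rowD lam.card) = (ssytCountCells lam.cells 2 n : ℚ) := by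
  have hn0 : 0 < n := by omega
  set m := lam.card with hm
  -- apply phi
  have h1 : phi n (sbar lam n) = ∑ᶠ κ : YoungDiagram, c κ • phi n (schur κ n) := by
    rw [hc]
    have hsf : (Function.support fun κ : YoungDiagram => c κ • schur κ n).Finite :=
      hfin.subset (Function.support_smul_subset_left c _)
    exact ((phi n).toRingHom.toAddMonoidHom.map_finsum hsf).trans
      (finsum_congr fun κ => map_smul (phi n) _ _)
  -- take coefficient at m
  have h2 : Polynomial.coeff (phi n (sbar lam n)) m
      = ∑ᶠ κ : YoungDiagram, c κ * Polynomial.coeff (phi n (schur κ n)) m := by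
    rw [h1]
    have hsf : (Function.support fun κ : YoungDiagram => c κ • phi n (schur κ n)).Finite :=
      hfin.subset (Function.support_smul_subset_left c _)
    exact ((Polynomial.lcoeff ℚ m).toAddMonoidHom.map_finsum hsf).trans
      (finsum_congr fun κ => by
        simp [Polynomial.lcoeff_apply, Polynomial.coeff_smul, smul_eq_mul])
  -- RHS collapses to single term
  have h3 : (∑ᶠ κ : YoungDiagram, c κ * Polynomial.coeff (phi n (schur κ n)) m)
      = c (rowD m) := by
    rw [finsum_eq_single _ (rowD m) ?_]
    · rw [phi_schur hn0, if_pos (colLen_rowD m), rowD_card, Polynomial.coeff_X_pow,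
        if_pos rfl, mul_one]
    · intro κ hκ
      rw [phi_schur hn0]
      by_cases hcol : κ.colLen 0 ≤ 1
      · rw [if_pos hcol, Polynomial.coeff_X_pow]
        rcases eq_or_ne κ.card m with hcard | hcard
        · exact absurd (hcard ▸ eq_rowD hcol) hκ
        · rw [if_neg (Ne.symm hcard), mul_zero]
      · rw [if_neg hcol, Polynomial.coeff_zero, mul_zero]
  -- LHS equals the SSYT count
  have h4 : Polynomial.coeff (phi n (sbar lam n)) m
      = (ssytCountCells lam.cells 2 n : ℚ) := by
    rw [phi_sbar hn0, ← count_eq (n := n) lam]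
    simp [Polynomial.coeff_smul, Polynomial.coeff_X_pow]
    exact fun h => absurd hm h
  rw [h2, h3] at h4
  exact h4
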